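/- Acyclic support forces a unique factorization length: Let G = (V,E,r) be a graph and let a ∈ A(G) have acyclic support, meaning that for every nonempty subset E' ⊆ E_a, the number of vertices incident with at least one edge of E' is strictly greater than |E'|. Then every factorization of a into atoms has the same length: whenever a = b₁ + ⋯ + b_l with all b_i atoms of A(G), one has l = Σ_{v ∈ V} a_V(v) − Σ_{e ∈ E} a_E(e). -/

import Mathlib

/-- An agglomeration on the graph given by `r : E → Sym2 V`. -/
def IsAgg {V E : Type*} (r : E → Sym2 V) (a : (V → ℕ) × (E → ℕ)) : Prop :=
  ∀ (e : E) (v : V), v ∈ r e → a.2 e ≤ a.1 v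

/-- An atom of the monoid of agglomerations. -/
def IsAtomAgg {V E : Type*} (r : E → Sym2 V) (a : (V → ℕ) × (E → ℕ)) : Prop :=
  IsAgg r a ∧ a ≠ 0 ∧
    ∀ b c : (V → ℕ) × (E → ℕ), IsAgg r b → IsAgg r c → a = b + c → b = 0 ∨ c = 0

/-- The endpoint set of a non-diagonal `Sym2` has two elements. -/
lemma card_endpoints {V : Type*} [Fintype V] [DecidableEq V] (z : Sym2 V)
    (hz : ¬ z.IsDiag) : (Finset.univ.filter (· ∈ z)).card = 2 := by
  induction z using Sym2.ind with
  | _ x y =>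
    have hxy : x ≠ y := by simpa using hz
    have : Finset.univ.filter (· ∈ s(x, y)) = {x, y} := by
      ext w; simp [Sym2.mem_iff]
    rw [this, Finset.card_pair hxy]

/-- In an acyclic support there is a leaf: an edge with an endpoint incident to
no other supported edge. -/
lemma exists_leaf {V E : Type*} [Fintype V] [Fintype E] (r : E → Sym2 V)
    (hr : ∀ e : E, ¬ (r e).IsDiag) (b2 : E → ℕ) (hne : ∃ e, 0 < b2 e)
    (hacyc : ∀ E' : Finset E, E'.Nonempty → (∀ e ∈ E', 0 < b2 e) →
      E'.card < Nat.card {v : V // ∃ e ∈ E', v ∈ r e}) :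
    ∃ e v, 0 < b2 e ∧ v ∈ r e ∧ ∀ e', 0 < b2 e' → v ∈ r e' → e' = e := by
  classical
  by_contra hcon
  push_neg at hcon
  set E' : Finset E := Finset.univ.filter (fun e => 0 < b2 e) with hE'
  have hE'mem : ∀ e, e ∈ E' ↔ 0 < b2 e := by intro e; simp [hE']
  have hE'ne : E'.Nonempty := by
    obtain ⟨e, he⟩ := hne
    exact ⟨e, (hE'mem e).2 he⟩
  set inc : Finset V := Finset.univ.filter (fun v => ∃ e ∈ E', v ∈ r e) with hinc
  have hcard : Nat.card {v : V // ∃ e ∈ E', v ∈ r e} = inc.card := by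
    rw [Nat.card_eq_fintype_card, Fintype.card_subtype]
  have hlt : E'.card < inc.card := by
    have := hacyc E' hE'ne (fun e he => (hE'mem e).1 he)
    rwa [hcard] at this
  -- every vertex in `inc` has degree at least 2
  have hdeg : ∀ v ∈ inc, 2 ≤ (E'.filter (fun e => v ∈ r e)).card := by
    intro v hv
    rw [hinc, Finset.mem_filter] at hv
    obtain ⟨-, e, he, hve⟩ := hv
    obtain ⟨e', he'pos, hve', hee'⟩ := hcon e v ((hE'mem e).1 he) hve
    have hsub : ({e, e'} : Finset E) ⊆ E'.filter (fun f => v ∈ r f) := by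
      intro f hf
      rcases Finset.mem_insert.1 hf with rfl | hf
      · exact Finset.mem_filter.2 ⟨he, hve⟩
      · rw [Finset.mem_singleton] at hf; rw [hf]
        exact Finset.mem_filter.2 ⟨(hE'mem e').2 he'pos, hve'⟩
    calc 2 = ({e, e'} : Finset E).card := (Finset.card_pair (Ne.symm hee')).symm
      _ ≤ _ := Finset.card_le_card hsub
  -- double counting
  have hsum : ∑ v : V, (E'.filter (fun e => v ∈ r e)).card
      = ∑ e ∈ E', (Finset.univ.filter (fun v => v ∈ r e)).card := by
    simp only [Finset.card_filter]
    exact Finset.sum_comm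
  have hrhs : ∑ e ∈ E', (Finset.univ.filter (fun v => v ∈ r e)).card = 2 * E'.card := by
    rw [Finset.sum_congr rfl (fun e _ => card_endpoints (r e) (hr e))]
    simp [mul_comm]
  have hlhs : 2 * inc.card ≤ ∑ v : V, (E'.filter (fun e => v ∈ r e)).card := by
    calc 2 * inc.card = ∑ _v ∈ inc, 2 := by simp [mul_comm]
      _ ≤ ∑ v ∈ inc, (E'.filter (fun e => v ∈ r e)).card := Finset.sum_le_sum hdeg
      _ ≤ ∑ v : V, (E'.filter (fun e => v ∈ r e)).card :=
          Finset.sum_le_sum_of_subset (Finset.subset_univ inc)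
  omega

/-- Any atom with acyclic support has `Σ_v b_V(v) − Σ_e b_E(e) = 1`. -/
lemma atom_phi {V E : Type*} [Fintype V] [Fintype E] (r : E → Sym2 V)
    (hr : ∀ e : E, ¬ (r e).IsDiag) :
    ∀ (n : ℕ) (b : (V → ℕ) × (E → ℕ)), (∑ e, b.2 e) = n → IsAtomAgg r b →
      (∀ E' : Finset E, E'.Nonempty → (∀ e ∈ E', 0 < b.2 e) →
        E'.card < Nat.card {v : V // ∃ e ∈ E', v ∈ r e}) →
      (∑ v, (b.1 v : ℤ)) - (∑ e, (b.2 e : ℤ)) = 1 := by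
  classical
  intro n
  induction n with
  | zero =>
    intro b hn hatom _
    obtain ⟨hagg, hb0, hsplit⟩ := hatom
    have h2 : ∀ e, b.2 e = 0 := by
      intro e
      exact (Finset.sum_eq_zero_iff.1 hn) e (Finset.mem_univ e)
    have h1ex : ∃ v, 0 < b.1 v := by
      by_contra h
      push_neg at h
      apply hb0
      ext x
      · simpa using Nat.le_zero.1 (h x)
      · simp [h2]
    obtain ⟨v, hv⟩ := h1ex
    -- show Σ b.1 = 1 by atomicity
    have hsum1 : ∑ w, b.1 w = 1 := by
      by_contra hne1
      have hge2 : 2 ≤ ∑ w, b.1 w := by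
        have : b.1 v ≤ ∑ w, b.1 w :=
          Finset.single_le_sum (fun w _ => Nat.zero_le _) (Finset.mem_univ v)
        omega
      set c : (V → ℕ) × (E → ℕ) := (fun w => if w = v then 1 else 0, 0) with hc
      set d : (V → ℕ) × (E → ℕ) := (fun w => b.1 w - (if w = v then 1 else 0), 0) with hd
      have hcd : b = c + d := by
        ext w
        · simp only [hc, hd, Prod.fst_add, Pi.add_apply]
          by_cases h : w = v
          · rw [if_pos h, h]; omega
          · rw [if_neg h]; omega
        · simp [hc, hd, h2]
      rcases hsplit c d (fun e w _ => by simp [hc]) (fun e w _ => by simp [hd]) hcd with h | h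
      · have := congrFun (congrArg Prod.fst h) v
        simp [hc] at this
      · have hbw : ∀ w, b.1 w = if w = v then 1 else 0 := by
          intro w
          have := congrFun (congrArg Prod.fst h) w
          simp only [hd, Prod.fst_zero, Pi.zero_apply] at this
          by_cases hwv : w = v
          · rw [if_pos hwv] at this ⊢
            rw [hwv] at this ⊢
            omega
          · rw [if_neg hwv] at this ⊢
            omega
        apply hne1
        rw [Finset.sum_congr rfl (fun w _ => hbw w)]
        simp
    have : ∑ w, (b.1 w : ℤ) = 1 := by
      rw [← Nat.cast_sum, hsum1]; rfl
    rw [this]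
    simp [h2]
  | succ n ih =>
    intro b hn hatom hacyc
    obtain ⟨hagg, hb0, hsplit⟩ := hatom
    have hne : ∃ e, 0 < b.2 e := by
      by_contra h
      push_neg at h
      have : ∑ e, b.2 e = 0 := Finset.sum_eq_zero (fun e _ => Nat.le_zero.1 (h e))
      omega
    obtain ⟨e, v, hepos, hve, hleaf⟩ := exists_leaf r hr b.2 hne hacyc
    set u : V := Sym2.Mem.other hve with hu
    have hum : u ∈ r e := Sym2.other_mem hve
    have hunev : u ≠ v := Sym2.other_ne (hr e) hve
    have hspec : s(v, u) = r e := Sym2.other_spec hve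
    have hmem_e : ∀ w, w ∈ r e → w = v ∨ w = u := by
      intro w hw
      rw [← hspec, Sym2.mem_iff] at hw
      exact hw
    have hbv : 1 ≤ b.1 v := le_trans hepos (hagg e v hve)
    have hbu : b.2 e ≤ b.1 u := hagg e u hum
    set b' : (V → ℕ) × (E → ℕ) :=
      (fun w => b.1 w - (if w = v then 1 else 0),
       fun f => b.2 f - (if f = e then 1 else 0)) with hb'
    have hb'1 : ∀ w, b.1 w = b'.1 w + (if w = v then 1 else 0) := by
      intro w; simp only [hb']
      by_cases h : w = v <;> simp [h] <;> omega
    have hb'2 : ∀ f, b.2 f = b'.2 f + (if f = e then 1 else 0) := by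
      intro f; simp only [hb']
      by_cases h : f = e <;> simp [h] <;> omega
    -- b' is an agglomeration
    have hagg' : IsAgg r b' := by
      intro f w hw
      simp only [hb']
      by_cases hfe : f = e
      · subst hfe
        by_cases hwv : w = v
        · subst hwv; simp only [if_pos rfl]
          have := hagg f w hw; omega
        · simp only [if_neg hwv]
          have := hagg f w hw; omega
      · simp only [if_neg hfe]
        by_cases hwv : w = v
        · subst hwv
          rcases Nat.eq_zero_or_pos (b.2 f) with h0 | hpos
          · simp [h0]
          · exact absurd (hleaf f hpos hw) hfe
        · simp only [if_neg hwv]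
          exact hagg f w hw
    -- b' is nonzero
    have hb'ne : b' ≠ 0 := by
      intro h
      have h1 := congrFun (congrArg Prod.fst h) u
      simp only [hb', Prod.fst_zero, Pi.zero_apply, if_neg hunev] at h1
      omega
    -- the key splitting argument
    have key : ∀ c d : (V → ℕ) × (E → ℕ), IsAgg r c → IsAgg r d → b' = c + d →
        c.2 e + 1 ≤ c.1 u → d = 0 := by
      intro c d hc hd hcd hcu
      set c' : (V → ℕ) × (E → ℕ) :=
        (fun w => c.1 w + (if w = v then 1 else 0),
         fun f => c.2 f + (if f = e then 1 else 0)) with hc'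
      have hc'agg : IsAgg r c' := by
        intro f w hw
        simp only [hc']
        by_cases hfe : f = e
        · by_cases hwv : w = v
          · rw [if_pos hfe, if_pos hwv]
            have := hc f w hw; omega
          · have hwre : w ∈ r e := hfe ▸ hw
            have hwu : w = u := (hmem_e w hwre).resolve_left hwv
            rw [if_pos hfe, if_neg hwv, hwu, hfe]
            omega
        · rw [if_neg hfe]
          have := hc f w hw
          by_cases hwv : w = v
          · rw [if_pos hwv]; omega
          · rw [if_neg hwv]; omega
      have hb_eq : b = c' + d := by
        ext w
        · have h1 := congrFun (congrArg Prod.fst hcd) w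
          simp only [hb', hc', Prod.fst_add, Pi.add_apply] at h1 ⊢
          by_cases hwv : w = v
          · rw [if_pos hwv] at h1 ⊢
            rw [hwv] at h1 ⊢
            omega
          · rw [if_neg hwv] at h1 ⊢
            omega
        · have h1 := congrFun (congrArg Prod.snd hcd) w
          simp only [hb', hc', Prod.snd_add, Pi.add_apply] at h1 ⊢
          by_cases hwe : w = e
          · rw [if_pos hwe] at h1 ⊢
            rw [hwe] at h1 ⊢
            omega
          · rw [if_neg hwe] at h1 ⊢
            omega
      rcases hsplit c' d hc'agg hd hb_eq with h | h
      · exfalso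
        have := congrFun (congrArg Prod.fst h) v
        simp [hc'] at this
      · exact h
    have hatom' : IsAtomAgg r b' := by
      refine ⟨hagg', hb'ne, ?_⟩
      intro c d hc hd hcd
      -- from b.1 u ≥ b.2 e = b'.2 e + 1, one of c, d has room at u
      have h1 := congrFun (congrArg Prod.fst hcd) u
      have h2 := congrFun (congrArg Prod.snd hcd) e
      simp only [hb', Prod.fst_add, Prod.snd_add, Pi.add_apply, if_neg hunev,
        if_true] at h1 h2
      by_cases hcase : c.2 e + 1 ≤ c.1 u
      · exact Or.inr (key c d hc hd hcd hcase)
      · have hdcase : d.2 e + 1 ≤ d.1 u := by omega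
        exact Or.inl (key d c hd hc (by rw [hcd, add_comm]) hdcase)
    have hacyc' : ∀ E' : Finset E, E'.Nonempty → (∀ f ∈ E', 0 < b'.2 f) →
        E'.card < Nat.card {w : V // ∃ f ∈ E', w ∈ r f} := by
      intro E' hE'ne hE'pos
      refine hacyc E' hE'ne (fun f hf => ?_)
      have := hE'pos f hf
      have := hb'2 f
      omega
    have hn' : ∑ f, b'.2 f = n := by
      have : ∑ f, b.2 f = (∑ f, b'.2 f) + 1 := by
        rw [Finset.sum_congr rfl (fun f _ => hb'2 f), Finset.sum_add_distrib]
        simp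
      omega
    have hres := ih b' hn' hatom' hacyc'
    -- relate the sums of b and b'
    have hs1 : ∑ w, (b.1 w : ℤ) = (∑ w, (b'.1 w : ℤ)) + 1 := by
      have : ∑ w, b.1 w = (∑ w, b'.1 w) + 1 := by
        rw [Finset.sum_congr rfl (fun w _ => hb'1 w), Finset.sum_add_distrib]
        simp
      push_cast [← Nat.cast_sum]
      exact_mod_cast congrArg (Nat.cast : ℕ → ℤ) this
    have hs2 : ∑ f, (b.2 f : ℤ) = (∑ f, (b'.2 f : ℤ)) + 1 := by
      have : ∑ f, b.2 f = (∑ f, b'.2 f) + 1 := by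
        rw [Finset.sum_congr rfl (fun f _ => hb'2 f), Finset.sum_add_distrib]
        simp
      exact_mod_cast congrArg (Nat.cast : ℕ → ℤ) this
    rw [hs1, hs2]
    omega

/-- **Acyclic support forces a unique factorization length**: if the support of
`a ∈ A(G)` is acyclic, then every factorization of `a` into atoms has length
`Σ_v a_V(v) − Σ_e a_E(e)`. -/
theorem acyclic_support_length {V E : Type*} [Fintype V] [Fintype E]
    (r : E → Sym2 V) (hr : ∀ e : E, ¬ (r e).IsDiag)
    (a : (V → ℕ) × (E → ℕ)) (ha : IsAgg r a)
    (hacyc : ∀ E' : Set E, E'.Nonempty → (∀ e ∈ E', 0 < a.2 e) →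
      Nat.card ↥E' < Nat.card {v : V // ∃ e ∈ E', v ∈ r e}) :
    ∀ (l : ℕ) (b : Fin l → (V → ℕ) × (E → ℕ)),
      (∀ i, IsAtomAgg r (b i)) → a = ∑ i, b i →
      (l : ℤ) = (∑ v : V, (a.1 v : ℤ)) - ∑ e : E, (a.2 e : ℤ) := by
  classical
  intro l b hb hsum
  have ha1 : ∀ v, a.1 v = ∑ i, (b i).1 v := by
    intro v
    rw [hsum, Prod.fst_sum, Finset.sum_apply]
  have ha2 : ∀ e, a.2 e = ∑ i, (b i).2 e := by
    intro e
    rw [hsum, Prod.snd_sum, Finset.sum_apply]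
  have hle : ∀ i e, (b i).2 e ≤ a.2 e := by
    intro i e
    rw [ha2 e]
    exact Finset.single_le_sum (f := fun j => (b j).2 e)
      (fun j _ => Nat.zero_le _) (Finset.mem_univ i)
  have hphi : ∀ i, (∑ v, ((b i).1 v : ℤ)) - (∑ e, ((b i).2 e : ℤ)) = 1 := by
    intro i
    refine atom_phi r hr (∑ e, (b i).2 e) (b i) rfl (hb i) ?_
    intro E' hE'ne hE'pos
    have hcoe : Nat.card ↥(↑E' : Set E) = E'.card := by
      simp [Nat.card_coe_set_eq]
    have hsetne : (↑E' : Set E).Nonempty := by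
      obtain ⟨e, he⟩ := hE'ne
      exact ⟨e, Finset.mem_coe.2 he⟩
    have := hacyc (↑E' : Set E) hsetne (fun e he => by
      have h1 := hE'pos e (Finset.mem_coe.1 he)
      have h2 := hle i e
      omega)
    rw [hcoe] at this
    have hequiv : Nat.card {v : V // ∃ e ∈ (↑E' : Set E), v ∈ r e}
        = Nat.card {v : V // ∃ e ∈ E', v ∈ r e} := by
      apply Nat.card_congr
      exact Equiv.subtypeEquivRight (fun v => by simp)
    rwa [hequiv] at this
  have : ∑ i : Fin l, ((∑ v, ((b i).1 v : ℤ)) - (∑ e, ((b i).2 e : ℤ))) = (l : ℤ) := by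
    rw [Finset.sum_congr rfl (fun i _ => hphi i)]
    simp
  rw [← this, Finset.sum_sub_distrib]
  rw [Finset.sum_congr rfl (fun v (_ : v ∈ Finset.univ) => by
      rw [ha1 v]; push_cast; ring_nf : ∀ v ∈ Finset.univ, ((a.1 v : ℤ) = ∑ i, ((b i).1 v : ℤ))),
    Finset.sum_congr rfl (fun e (_ : e ∈ Finset.univ) => by
      rw [ha2 e]; push_cast; ring_nf : ∀ e ∈ Finset.univ, ((a.2 e : ℤ) = ∑ i, ((b i).2 e : ℤ))),
    Finset.sum_comm, Finset.sum_comm (γ := E)]
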